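/- Let 𝒜 be the compact subintervals of [a,b], ν the length function, and μ₁, μ₂ : 𝒜 → ℝ interval-additive set functions. If μ₁ and μ₂ have strict derivatives with respect to ν at every point of [a,b] and these derivatives are equal, then μ₁(I) = μ₂(I) for every I ∈ 𝒜. -/
import Mathlib


/-- `μ c d` is the value of the set function on the interval `[c,d]`;
interval-additivity: `μ [c,e] = μ [c,d] + μ [d,e]` for `c ≤ d ≤ e` in `[a,b]`. -/
def IntervalAdditive (a b : ℝ) (μ : ℝ → ℝ → ℝ) : Prop :=
  ∀ c d e : ℝ, a ≤ c → c ≤ d → d ≤ e → e ≤ b → μ c e = μ c d + μ d e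

/-- `g` is the Peano strict derivative of the interval function `μ` with respect
to length on `[a,b]`: for every `x ∈ [a,b]` and `ε > 0` there is `δ > 0` with
`|μ [c,d] / (d - c) - g x| < ε` for every nondegenerate interval
`[c,d] ⊆ (x - δ, x + δ) ∩ [a,b]`. -/
def PeanoStrictDeriv (a b : ℝ) (μ : ℝ → ℝ → ℝ) (g : ℝ → ℝ) : Prop :=
  ∀ x ∈ Set.Icc a b, ∀ ε > 0, ∃ δ > 0, ∀ c d : ℝ, a ≤ c → c < d → d ≤ b →
    Set.Icc c d ⊆ Set.Ioo (x - δ) (x + δ) → |μ c d / (d - c) - g x| < ε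

/-- Peano's uniqueness corollary: two interval-additive set functions with the
same strict derivative with respect to length on `[a,b]` are equal. -/
theorem peano_equal_strict_derivatives (a b : ℝ) (μ₁ μ₂ : ℝ → ℝ → ℝ) (g : ℝ → ℝ)
    (hμ₁ : IntervalAdditive a b μ₁) (hμ₂ : IntervalAdditive a b μ₂)
    (h₁ : PeanoStrictDeriv a b μ₁ g) (h₂ : PeanoStrictDeriv a b μ₂ g) :
    ∀ c d : ℝ, a ≤ c → c ≤ d → d ≤ b → μ₁ c d = μ₂ c d := by
  intro c d hac hcd hdb
  rcases eq_or_lt_of_le hcd with rfl | hlt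
  · have e1 := hμ₁ c c c hac le_rfl le_rfl hdb
    have e2 := hμ₂ c c c hac le_rfl le_rfl hdb
    linarith
  have hcb : c ≤ b := le_trans hcd hdb
  have key : ∀ ε : ℝ, 0 < ε → |μ₁ c d - μ₂ c d| ≤ ε * (d - c) := by
    intro ε hε
    set S : Set ℝ := {y | y ∈ Set.Icc c d ∧ |μ₁ c y - μ₂ c y| ≤ ε * (y - c)} with hSdef
    have hcS : c ∈ S := by
      refine ⟨⟨le_rfl, hcd⟩, ?_⟩
      have e1 := hμ₁ c c c hac le_rfl le_rfl hcb
      have e2 := hμ₂ c c c hac le_rfl le_rfl hcb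
      have : μ₁ c c - μ₂ c c = 0 := by linarith
      rw [this, abs_zero]
      nlinarith
    have hbdd : BddAbove S := ⟨d, fun y hy => hy.1.2⟩
    have hne : S.Nonempty := ⟨c, hcS⟩
    set t := sSup S with ht
    have hct : c ≤ t := le_csSup hbdd hcS
    have htd : t ≤ d := csSup_le hne (fun y hy => hy.1.2)
    have htab : t ∈ Set.Icc a b := ⟨le_trans hac hct, le_trans htd hdb⟩
    obtain ⟨δ₁, hδ₁, H₁⟩ := h₁ t htab (ε / 2) (by linarith)
    obtain ⟨δ₂, hδ₂, H₂⟩ := h₂ t htab (ε / 2) (by linarith)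
    set δ := min δ₁ δ₂ with hδdef
    have hδ : 0 < δ := lt_min hδ₁ hδ₂
    obtain ⟨y, hyS, hy⟩ := exists_lt_of_lt_csSup hne (by linarith : t - δ / 2 < t)
    have hyt : y ≤ t := le_csSup hbdd hyS
    set z := min d (t + δ / 2) with hzdef
    have hzt : t ≤ z := le_min htd (by linarith)
    have hzd : z ≤ d := min_le_left _ _
    have hzb : z ≤ b := le_trans hzd hdb
    have hay : a ≤ y := le_trans hac hyS.1.1
    have hcy : c ≤ y := hyS.1.1
    have hdS : d ∈ S := by
      rcases eq_or_lt_of_le (le_trans hyt hzt) with heq | hyz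
      · -- y = z, hence t = z and d ≤ t, so d = y ∈ S
        have hzt' : z = t := le_antisymm (heq ▸ hyt) hzt
        have hdt : d ≤ t := by
          by_contra hdt
          push_neg at hdt
          have : z > t := lt_min hdt (by linarith)
          linarith
        have hyd : y = d := by
          have : d = t := le_antisymm hdt htd
          rw [heq, hzt', this]
        exact hyd ▸ hyS
      · -- y < z : local estimate shows z ∈ S, forcing z = t and d = t
        have hsub : Set.Icc y z ⊆ Set.Ioo (t - δ) (t + δ) := by
          intro u hu
          constructor
          · have : t - δ < y := by linarith
            linarith [hu.1]
          · have : z ≤ t + δ / 2 := min_le_right _ _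
            have := hu.2
            linarith
        have hsub₁ : Set.Icc y z ⊆ Set.Ioo (t - δ₁) (t + δ₁) := by
          refine hsub.trans (Set.Ioo_subset_Ioo ?_ ?_)
          · have := min_le_left δ₁ δ₂; linarith
          · have := min_le_left δ₁ δ₂; linarith
        have hsub₂ : Set.Icc y z ⊆ Set.Ioo (t - δ₂) (t + δ₂) := by
          refine hsub.trans (Set.Ioo_subset_Ioo ?_ ?_)
          · have := min_le_right δ₁ δ₂; linarith
          · have := min_le_right δ₁ δ₂; linarith
        have e1 := H₁ y z hay hyz hzb hsub₁
        have e2 := H₂ y z hay hyz hzb hsub₂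
        have hl : 0 < z - y := sub_pos.2 hyz
        have hquot : |(μ₁ y z - μ₂ y z) / (z - y)| < ε := by
          have hrw : (μ₁ y z - μ₂ y z) / (z - y)
              = (μ₁ y z / (z - y) - g t) - (μ₂ y z / (z - y) - g t) := by
            rw [sub_div]; ring
          rw [hrw]
          calc |(μ₁ y z / (z - y) - g t) - (μ₂ y z / (z - y) - g t)|
              ≤ |μ₁ y z / (z - y) - g t| + |μ₂ y z / (z - y) - g t| := abs_sub _ _
            _ < ε / 2 + ε / 2 := add_lt_add e1 e2
            _ = ε := by ring
        have hloc : |μ₁ y z - μ₂ y z| ≤ ε * (z - y) := by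
          rw [abs_div, abs_of_pos hl] at hquot
          rw [div_lt_iff₀ hl] at hquot
          linarith
        have a1 := hμ₁ c y z hac hcy (le_of_lt hyz) hzb
        have a2 := hμ₂ c y z hac hcy (le_of_lt hyz) hzb
        have hzS : z ∈ S := by
          refine ⟨⟨le_trans hcy (le_of_lt hyz), hzd⟩, ?_⟩
          have hrw : μ₁ c z - μ₂ c z = (μ₁ c y - μ₂ c y) + (μ₁ y z - μ₂ y z) := by
            rw [a1, a2]; ring
          rw [hrw]
          calc |(μ₁ c y - μ₂ c y) + (μ₁ y z - μ₂ y z)|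
              ≤ |μ₁ c y - μ₂ c y| + |μ₁ y z - μ₂ y z| := abs_add_le _ _
            _ ≤ ε * (y - c) + ε * (z - y) := add_le_add hyS.2 hloc
            _ = ε * (z - c) := by ring
        have hzt' : z = t := le_antisymm (le_csSup hbdd hzS) hzt
        have hdt : d ≤ t := by
          by_contra hdt
          push_neg at hdt
          have : z > t := lt_min hdt (by linarith)
          linarith
        have : z = d := by rw [hzt']; exact le_antisymm htd hdt
        exact this ▸ hzS
    exact hdS.2
  have hpos : 0 < d - c := sub_pos.2 hlt
  have habs : |μ₁ c d - μ₂ c d| ≤ 0 := by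
    refine le_of_forall_pos_le_add ?_
    intro η hη
    have := key (η / (d - c)) (div_pos hη hpos)
    rw [div_mul_cancel₀ _ (ne_of_gt hpos)] at this
    linarith
  have : μ₁ c d - μ₂ c d = 0 := abs_eq_zero.1 (le_antisymm habs (abs_nonneg _))
  linarith
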